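/- arXiv:2210.07320 — 2 statements merged into one kernel-verified Lean document; each statement's English description precedes it below -/
import Mathlib

section
/- Every normal 2×2 complex matrix can be written in the form [[a, b], [e^{2ik}·conj(b), a + m·e^{ik}]] for some a, b ∈ ℂ and k, m ∈ ℝ. -/
open Complex Matrix

theorem stmt_1 (M : Matrix (Fin 2) (Fin 2) ℂ) (hM : M * Mᴴ = Mᴴ * M) :
    ∃ (a b : ℂ) (k m : ℝ),
      M = !![a, b;
             Complex.exp (2 * Complex.I * k) * starRingEnd ℂ b,
             a + m * Complex.exp (Complex.I * k)] := by
  set p := M 0 0 with hp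
  set b := M 0 1 with hb
  set c := M 1 0 with hcdef
  set d := M 1 1 with hd
  have h00 := congrFun (congrFun hM 0) 0
  have h01 := congrFun (congrFun hM 0) 1
  simp only [Matrix.mul_apply, Fin.sum_univ_two, Matrix.conjTranspose_apply,
    RCLike.star_def] at h00 h01
  have habs : Complex.normSq b = Complex.normSq c := by
    have h : b * starRingEnd ℂ b = c * starRingEnd ℂ c := by linear_combination h00
    rw [Complex.mul_conj, Complex.mul_conj] at h
    exact_mod_cast h
  have hw : starRingEnd ℂ c * (d - p) = b * (starRingEnd ℂ d - starRingEnd ℂ p) := by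
    linear_combination -h01
  by_cases hb0 : b = 0
  · -- then c = 0; pick k = arg (d - p), m = |d - p|
    have hc0 : c = 0 := by
      rw [← Complex.normSq_eq_zero, ← habs, hb0]; simp
    refine ⟨p, 0, (d - p).arg, ‖d - p‖, ?_⟩
    rw [Matrix.eta_fin_two M, ← hp, ← hb, ← hcdef, ← hd, hb0, hc0]
    have h21 : Complex.exp (2 * Complex.I * ((d - p).arg : ℂ)) * starRingEnd ℂ 0 = 0 := by
      simp
    have h22 : p + (‖d - p‖ : ℂ) *
        Complex.exp (Complex.I * ((d - p).arg : ℂ)) = d := by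
      rw [mul_comm Complex.I ((d - p).arg : ℂ), Complex.norm_mul_exp_arg_mul_I]; ring
    rw [h21, h22]
  · -- b ≠ 0, hence c ≠ 0
    have hc0 : c ≠ 0 := fun h => hb0 (by
      rw [← Complex.normSq_eq_zero] at h ⊢; rw [habs, h])
    set k : ℝ := (c * b).arg / 2 with hk
    set f : ℂ := Complex.exp (Complex.I * (k : ℂ)) with hf
    have hf0 : f ≠ 0 := Complex.exp_ne_zero _
    have habs' : ‖c‖ = ‖b‖ := by
      rw [Complex.norm_def, Complex.norm_def, habs]
    have habscb : (‖c * b‖ : ℂ) = (Complex.normSq b : ℂ) := by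
      have : ‖c * b‖ = Complex.normSq b := by
        rw [norm_mul, habs', ← Complex.sq_norm]; ring
      exact_mod_cast this
    have hexp : Complex.exp (2 * Complex.I * (k : ℂ)) * (‖c * b‖ : ℂ)
        = c * b := by
      have h1 : 2 * Complex.I * (k : ℂ) = ((c * b).arg : ℂ) * Complex.I := by
        rw [hk]; push_cast; ring
      rw [h1, mul_comm]
      exact Complex.norm_mul_exp_arg_mul_I _
    have hcc : c = Complex.exp (2 * Complex.I * (k : ℂ)) * starRingEnd ℂ b := by
      apply mul_right_cancel₀ hb0
      calc c * b = Complex.exp (2 * Complex.I * (k : ℂ)) * (Complex.normSq b : ℂ) := by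
            rw [← habscb, hexp]
        _ = Complex.exp (2 * Complex.I * (k : ℂ)) * starRingEnd ℂ b * b := by
            linear_combination (-Complex.exp (2 * Complex.I * (k : ℂ))) * Complex.mul_conj b
    have he2 : Complex.exp (2 * Complex.I * (k : ℂ)) = f * f := by
      rw [hf, ← Complex.exp_add]; ring_nf
    have hnegk : starRingEnd ℂ f = f⁻¹ := by
      rw [hf, ← Complex.exp_conj, ← Complex.exp_neg]
      congr 1
      rw [_root_.map_mul, Complex.conj_I, Complex.conj_ofReal]; ring
    have h1 : starRingEnd ℂ c = f⁻¹ * f⁻¹ * b := by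
      rw [hcc, he2, _root_.map_mul, _root_.map_mul, hnegk, Complex.conj_conj]
    have hconjw : starRingEnd ℂ (d - p) = f⁻¹ * f⁻¹ * (d - p) := by
      rw [map_sub]
      apply mul_left_cancel₀ hb0
      linear_combination (d - p) * h1 - hw
    have hu : starRingEnd ℂ (f⁻¹ * (d - p)) = f⁻¹ * (d - p) := by
      rw [_root_.map_mul, map_inv₀, hnegk, inv_inv, hconjw]
      field_simp
    have hr := Complex.conj_eq_iff_re.mp hu
    refine ⟨p, b, k, (f⁻¹ * (d - p)).re, ?_⟩
    rw [Matrix.eta_fin_two M, ← hp, ← hb, ← hcdef, ← hd]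
    have hdd : p + ((f⁻¹ * (d - p)).re : ℂ) * f = d := by
      rw [hr]; field_simp; ring
    rw [← hf, hdd, ← hcc]
end

section
/- Let X = e^{2iθ}|00⟩⟨ψ₁| − e^{-iφ}e^{-2iθ}|ψ₁⟩⟨11| + |00⟩⟨ψ₂| + e^{-iφ}|ψ₂⟩⟨11| (up to overall factor 1/2), with ψ₁ = (1/√2)(|01⟩+e^{iφ}|10⟩), ψ₂ = (1/√2)(|01⟩−e^{iφ}|10⟩). Then the partial traces satisfy Tr_A X = e^{iφ}·Tr_B X, i.e. X satisfies the phase-locking condition with phase shift φ even though it contains components of both phase delays φ and φ+π. -/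
open Complex Matrix

noncomputable section

abbrev Q := Fin 2 × Fin 2

def ket (a b : Fin 2) : Q → ℂ := fun p => if p = (a, b) then 1 else 0

/-- The outer product |u⟩⟨v| of two vectors on ℂ²⊗ℂ². -/
def outer (u v : Q → ℂ) : Matrix Q Q ℂ :=
  Matrix.of fun p q => u p * starRingEnd ℂ (v q)

/-- Partial trace over the first qubit. -/
def trA (X : Matrix Q Q ℂ) : Matrix (Fin 2) (Fin 2) ℂ :=
  Matrix.of fun i j => ∑ k, X (k, i) (k, j)

/-- Partial trace over the second qubit. -/
def trB (X : Matrix Q Q ℂ) : Matrix (Fin 2) (Fin 2) ℂ :=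
  Matrix.of fun i j => ∑ k, X (i, k) (j, k)

theorem stmt_19 (θ φ : ℝ) (ψ₁ ψ₂ : Q → ℂ)
    (hψ₁ : ψ₁ = fun p => (1 / Real.sqrt 2 : ℝ) *
      (ket 0 1 p + Complex.exp (Complex.I * φ) * ket 1 0 p))
    (hψ₂ : ψ₂ = fun p => (1 / Real.sqrt 2 : ℝ) *
      (ket 0 1 p - Complex.exp (Complex.I * φ) * ket 1 0 p))
    (X : Matrix Q Q ℂ)
    (hX : X = (1 / 2 : ℂ) •
      (Complex.exp (2 * Complex.I * θ) • outer (ket 0 0) ψ₁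
        - (Complex.exp (-(Complex.I * φ)) * Complex.exp (-(2 * Complex.I * θ))) •
            outer ψ₁ (ket 1 1)
        + outer (ket 0 0) ψ₂
        + Complex.exp (-(Complex.I * φ)) • outer ψ₂ (ket 1 1))) :
    trA X = Complex.exp (Complex.I * φ) • trB X := by
  subst hψ₁ hψ₂ hX
  have hc : (starRingEnd ℂ) (Complex.exp (Complex.I * φ)) = Complex.exp (-(Complex.I * φ)) := by
    rw [← Complex.exp_conj]; congr 1; simp [Complex.conj_I, mul_comm]
  have huw : Complex.exp (Complex.I * φ) * Complex.exp (-(Complex.I * φ)) = 1 := by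
    rw [← Complex.exp_add]; simp
  ext i j
  fin_cases i <;> fin_cases j <;>
    simp [trA, trB, outer, ket, Fin.sum_univ_two, hc, Prod.ext_iff]
  all_goals try ring
  linear_combination (-(1/2) * ((Real.sqrt 2 : ℝ) : ℂ)⁻¹ *
      (1 + Complex.exp (Complex.I * (θ : ℂ) * 2))) * huw
end
end
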